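/- Anti-transpose duality: if M is the boundary matrix of a filtration with n simplices and M^⊥ is its anti-transpose defined by (M^⊥)_{i,j} = M_{n+1-j, n+1-i}, then (i, j) is a persistence pair of M if and only if (n+1-j, n+1-i) is a persistence pair of M^⊥. -/

import Mathlib

/-- Left-to-right column addition over ℤ/2: add column `i` to column `j`. -/
def colAdd {n : ℕ} (M : Matrix (Fin n) (Fin n) (ZMod 2)) (i j : Fin n) :
    Matrix (Fin n) (Fin n) (ZMod 2) :=
  fun r c => if c = j then M r j + M r i else M r c

/-- One step of left-to-right column reduction: add some column `i` to a
later column `j`. -/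
def Step {n : ℕ} (M N : Matrix (Fin n) (Fin n) (ZMod 2)) : Prop :=
  ∃ i j : Fin n, i < j ∧ N = colAdd M i j

/-- `R` is obtained from `M` by a finite sequence of left-to-right column
additions. -/
def Reduces {n : ℕ} (M R : Matrix (Fin n) (Fin n) (ZMod 2)) : Prop :=
  Relation.ReflTransGen Step M R

/-- `i` is the lowest one (largest row index of a nonzero entry) of
column `j` of `R`. -/
def IsLow {n : ℕ} (R : Matrix (Fin n) (Fin n) (ZMod 2)) (i j : Fin n) : Prop :=
  R i j ≠ 0 ∧ ∀ r, R r j ≠ 0 → r ≤ i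

/-- A matrix is reduced if distinct nonzero columns have distinct lowest ones. -/
def Reduced {n : ℕ} (R : Matrix (Fin n) (Fin n) (ZMod 2)) : Prop :=
  ∀ i j j', IsLow R i j → IsLow R i j' → j = j'

/-- (i, j) is a persistence pair of `M`: `i` is the lowest one of column `j`
in some (equivalently, by uniqueness of the pairing, any) reduced form of `M`
obtained by left-to-right column additions. -/
def PersPair {n : ℕ} (M : Matrix (Fin n) (Fin n) (ZMod 2)) (i j : Fin n) : Prop :=
  ∃ R, Reduces M R ∧ Reduced R ∧ IsLow R i j

/-- The anti-transpose of `M`: entry (i,j) is entry (n+1-j, n+1-i) of `M`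
(1-based), i.e. reflection across the antidiagonal. -/
def antiTranspose {n : ℕ} (M : Matrix (Fin n) (Fin n) (ZMod 2)) :
    Matrix (Fin n) (Fin n) (ZMod 2) :=
  fun i j => M j.rev i.rev


attribute [local instance] Classical.propDecidable

open Finset Submodule Module Matrix

variable {n : ℕ}

/-- rank of the submatrix with rows in `I`, columns in `J`. -/
noncomputable def rk (M : Matrix (Fin n) (Fin n) (ZMod 2)) (I J : Finset (Fin n)) : ℕ :=
  (M.submatrix (Subtype.val : I → Fin n) (Subtype.val : J → Fin n)).rank

lemma rk_eq (M : Matrix (Fin n) (Fin n) (ZMod 2)) (I J : Finset (Fin n)) :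
    rk M I J = finrank (ZMod 2)
      (span (ZMod 2) (Set.range (fun c : J => fun r : I => M r.1 c.1))) := by
  rw [rk, Matrix.rank_eq_finrank_span_cols]
  rfl

lemma span_range_eq {ι κ : Type*} {V : Type*} [AddCommGroup V] [Module (ZMod 2) V]
    (f : ι → V) (g : κ → V) (h1 : ∀ c, f c ∈ span (ZMod 2) (Set.range g))
    (h2 : ∀ c, g c ∈ span (ZMod 2) (Set.range f)) :
    span (ZMod 2) (Set.range f) = span (ZMod 2) (Set.range g) := by
  apply le_antisymm <;> rw [span_le] <;> rw [Set.range_subset_iff] <;> assumption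

lemma colAdd_apply_ne (M : Matrix (Fin n) (Fin n) (ZMod 2)) (i j r c : Fin n) (h : c ≠ j) :
    colAdd M i j r c = M r c := by simp [colAdd, h]

lemma colAdd_apply_self (M : Matrix (Fin n) (Fin n) (ZMod 2)) (i j r : Fin n) :
    colAdd M i j r j = M r j + M r i := by simp [colAdd]

lemma rk_colAdd (M : Matrix (Fin n) (Fin n) (ZMod 2)) {i j : Fin n} (hij : i < j)
    (I J : Finset (Fin n)) (hJ : ∀ a b : Fin n, a ≤ b → b ∈ J → a ∈ J) :
    rk (colAdd M i j) I J = rk M I J := by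
  have key : span (ZMod 2) (Set.range (fun c : J => fun r : I => colAdd M i j r.1 c.1))
      = span (ZMod 2) (Set.range (fun c : J => fun r : I => M r.1 c.1)) := by
    set f : J → (I → ZMod 2) := fun c => fun r => colAdd M i j r.1 c.1 with hf
    set g : J → (I → ZMod 2) := fun c => fun r => M r.1 c.1 with hg
    by_cases hjJ : j ∈ J
    · have hiJ : i ∈ J := hJ i j hij.le hjJ
      apply span_range_eq
      · intro c
        by_cases hc : c.1 = j
        · have : f c = g ⟨j, hjJ⟩ + g ⟨i, hiJ⟩ := by
            funext r
            simp [hf, hg, hc, colAdd_apply_self]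
          rw [this]
          exact add_mem (subset_span ⟨_, rfl⟩) (subset_span ⟨_, rfl⟩)
        · have : f c = g c := by funext r; simp [hf, hg, colAdd_apply_ne _ _ _ _ _ hc]
          rw [this]; exact subset_span ⟨_, rfl⟩
      · intro c
        by_cases hc : c.1 = j
        · have : g c = f ⟨j, hjJ⟩ - f ⟨i, hiJ⟩ := by
            funext r
            have hne : i ≠ j := ne_of_lt hij
            simp [hf, hg, hc, colAdd_apply_self, colAdd_apply_ne _ _ _ _ _ hne]
          rw [this]
          exact sub_mem (subset_span ⟨_, rfl⟩) (subset_span ⟨_, rfl⟩)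
        · have : g c = f c := by funext r; simp [hf, hg, colAdd_apply_ne _ _ _ _ _ hc]
          rw [this]; exact subset_span ⟨_, rfl⟩
    · have : f = g := by
        funext c r
        have hc : c.1 ≠ j := fun h => hjJ (h ▸ c.2)
        simp [hf, hg, colAdd_apply_ne _ _ _ _ _ hc]
      rw [this]
  rw [rk_eq, rk_eq, key]

lemma rk_reduces {M R : Matrix (Fin n) (Fin n) (ZMod 2)} (h : Reduces M R)
    (I J : Finset (Fin n)) (hJ : ∀ a b : Fin n, a ≤ b → b ∈ J → a ∈ J) :
    rk M I J = rk R I J := by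
  induction h with
  | refl => rfl
  | tail _ hstep ih =>
    obtain ⟨a, b, hab, rfl⟩ := hstep
    rw [ih, rk_colAdd _ hab _ _ hJ]

lemma zmod2_eq_one : ∀ {a : ZMod 2}, a ≠ 0 → a = 1 := by decide

noncomputable def lowOf (R : Matrix (Fin n) (Fin n) (ZMod 2)) (c : Fin n)
    (h : ∃ r, R r c ≠ 0) : Fin n :=
  (Finset.univ.filter (fun r => R r c ≠ 0)).max'
    (by obtain ⟨r, hr⟩ := h; exact ⟨r, mem_filter.2 ⟨mem_univ _, hr⟩⟩)

lemma isLow_lowOf (R : Matrix (Fin n) (Fin n) (ZMod 2)) (c : Fin n) (h : ∃ r, R r c ≠ 0) :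
    IsLow R (lowOf R c h) c := by
  have hmem := Finset.max'_mem (Finset.univ.filter (fun r => R r c ≠ 0))
    (by obtain ⟨r, hr⟩ := h; exact ⟨r, mem_filter.2 ⟨mem_univ _, hr⟩⟩)
  refine ⟨(mem_filter.1 hmem).2, fun r hr => ?_⟩
  exact Finset.le_max' (Finset.univ.filter (fun r => R r c ≠ 0)) r
    (mem_filter.2 ⟨mem_univ _, hr⟩)

lemma rk_count {R : Matrix (Fin n) (Fin n) (ZMod 2)} (hR : Reduced R) (I J : Finset (Fin n))
    (hI : ∀ a b : Fin n, a ≤ b → a ∈ I → b ∈ I) :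
    rk R I J = (J.filter (fun c => ∃ r ∈ I, R r c ≠ 0)).card := by
  set J' := J.filter (fun c => ∃ r ∈ I, R r c ≠ 0) with hJ'
  set g : J' → (I → ZMod 2) := fun c => fun r => R r.1 c.1 with hg
  have hne : ∀ c : J', ∃ r, R r c.1 ≠ 0 := by
    intro c
    obtain ⟨-, r, -, hr⟩ := mem_filter.1 c.2
    exact ⟨r, hr⟩
  have hlowI : ∀ c : J', lowOf R c.1 (hne c) ∈ I := by
    intro c
    obtain ⟨-, r, hrI, hr⟩ := mem_filter.1 c.2
    exact hI r _ ((isLow_lowOf R c.1 (hne c)).2 r hr) hrI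
  have hinj : ∀ c c' : J', lowOf R c.1 (hne c) = lowOf R c'.1 (hne c') → c = c' := by
    intro c c' h
    exact Subtype.ext (hR _ _ _ (h ▸ isLow_lowOf R c.1 (hne c)) (isLow_lowOf R c'.1 (hne c')))
  have hli : LinearIndependent (ZMod 2) g := by
    rw [linearIndependent_iff']
    intro s
    induction s using Finset.strongInduction with
    | _ s ih =>
      intro co hsum t ht
      obtain ⟨c₀, hc₀s, hmax⟩ := Finset.exists_max_image s (fun c => lowOf R c.1 (hne c)) ⟨t, ht⟩
      have hi₀I : lowOf R c₀.1 (hne c₀) ∈ I := hlowI c₀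
      have heval := congrFun hsum ⟨lowOf R c₀.1 (hne c₀), hi₀I⟩
      simp only [Finset.sum_apply, Pi.smul_apply, smul_eq_mul, Pi.zero_apply] at heval
      have hzero : ∀ b ∈ s, b ≠ c₀ → co b * g b ⟨lowOf R c₀.1 (hne c₀), hi₀I⟩ = 0 := by
        intro b hb hbne
        have hlt : lowOf R b.1 (hne b) < lowOf R c₀.1 (hne c₀) :=
          lt_of_le_of_ne (hmax b hb) (fun h => hbne (hinj _ _ h))
        have hz : R (lowOf R c₀.1 (hne c₀)) b.1 = 0 := by
          by_contra hz
          exact absurd ((isLow_lowOf R b.1 (hne b)).2 _ hz) (not_le.2 hlt)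
        show co b * R (lowOf R c₀.1 (hne c₀)) b.1 = 0
        rw [hz, mul_zero]
      rw [Finset.sum_eq_single c₀ hzero (fun h => absurd hc₀s h)] at heval
      have hco₀ : co c₀ = 0 := by
        rcases mul_eq_zero.1 heval with h | h
        · exact h
        · exact absurd h (isLow_lowOf R c₀.1 (hne c₀)).1
      by_cases hteq : t = c₀
      · rw [hteq]; exact hco₀
      · refine ih (s.erase c₀) (Finset.erase_ssubset hc₀s) co ?_ t (Finset.mem_erase.2 ⟨hteq, ht⟩)
        rw [Finset.sum_erase_eq_sub hc₀s, hsum, hco₀, zero_smul, sub_zero]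
  have hsp : span (ZMod 2) (Set.range (fun c : J => fun r : I => R r.1 c.1))
      = span (ZMod 2) (Set.range g) := by
    apply span_range_eq
    · intro c
      by_cases hc : ∃ r ∈ I, R r c.1 ≠ 0
      · exact subset_span ⟨⟨c.1, mem_filter.2 ⟨c.2, hc⟩⟩, rfl⟩
      · push_neg at hc
        have h0 : (fun r : I => R r.1 c.1) = 0 := funext fun r => hc r.1 r.2
        rw [h0]; exact zero_mem _
    · intro c
      exact subset_span ⟨⟨c.1, (mem_filter.1 c.2).1⟩, rfl⟩
  rw [rk_eq, hsp, finrank_span_eq_card hli, Fintype.card_coe]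

lemma isLow_iff (R : Matrix (Fin n) (Fin n) (ZMod 2)) (i j : Fin n) :
    IsLow R i j ↔ ((∃ r, i ≤ r ∧ R r j ≠ 0) ∧ ¬ ∃ r, i < r ∧ R r j ≠ 0) := by
  constructor
  · rintro ⟨h1, h2⟩
    exact ⟨⟨i, le_refl i, h1⟩, fun ⟨r, hr, hz⟩ => absurd (h2 r hz) (not_le.2 hr)⟩
  · rintro ⟨⟨r, hir, hr⟩, h2⟩
    push_neg at h2
    have h3 : ∀ r', R r' j ≠ 0 → r' ≤ i := fun r' hz => not_lt.1 (fun hlt => hz (h2 r' hlt))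
    have hri : r = i := le_antisymm (h3 r hr) hir
    exact ⟨hri ▸ hr, h3⟩

noncomputable def measCol (R : Matrix (Fin n) (Fin n) (ZMod 2)) (c : Fin n) : ℕ :=
  (Finset.univ.filter (fun r => R r c ≠ 0)).sup (fun r => (r : ℕ) + 1)

noncomputable def meas (R : Matrix (Fin n) (Fin n) (ZMod 2)) : ℕ := ∑ c, measCol R c

lemma step_meas_aux {R : Matrix (Fin n) (Fin n) (ZMod 2)} {i a b : Fin n} (hab : a < b)
    (ha : IsLow R i a) (hb : IsLow R i b) : meas (colAdd R a b) < meas R := by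
  have hRb : measCol R b = (i : ℕ) + 1 := by
    apply le_antisymm
    · apply Finset.sup_le
      intro r hr
      have := hb.2 r (mem_filter.1 hr).2
      omega
    · exact Finset.le_sup (f := fun r : Fin n => (r : ℕ) + 1)
        (mem_filter.2 ⟨mem_univ _, hb.1⟩)
  have hcolb : measCol (colAdd R a b) b ≤ (i : ℕ) := by
    apply Finset.sup_le
    intro r hr
    have hrz : R r b + R r a ≠ 0 := by
      have := (mem_filter.1 hr).2
      rwa [colAdd_apply_self] at this
    have hri : r < i := by
      rcases lt_trichotomy r i with h | h | h
      · exact h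
      · exfalso
        subst h
        rw [zmod2_eq_one ha.1, zmod2_eq_one hb.1] at hrz
        exact hrz (by decide)
      · exfalso
        have h1 : R r b = 0 := by
          by_contra hc; exact absurd (hb.2 r hc) (not_le.2 h)
        have h2 : R r a = 0 := by
          by_contra hc; exact absurd (ha.2 r hc) (not_le.2 h)
        rw [h1, h2, add_zero] at hrz
        exact hrz rfl
    have : (r : ℕ) < (i : ℕ) := hri
    omega
  have hle : ∀ c : Fin n, c ∈ Finset.univ → measCol (colAdd R a b) c ≤ measCol R c := by
    intro c _
    by_cases hc : c = b
    · subst hc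
      rw [hRb]
      omega
    · have hfe : (Finset.univ.filter fun r => colAdd R a b r c ≠ 0)
          = Finset.univ.filter fun r => R r c ≠ 0 := by
        apply Finset.filter_congr
        intro r _
        simp [colAdd_apply_ne _ _ _ _ _ hc]
      unfold measCol
      rw [hfe]
  exact Finset.sum_lt_sum hle ⟨b, mem_univ b, by rw [hRb]; omega⟩

lemma step_meas {R : Matrix (Fin n) (Fin n) (ZMod 2)} (h : ¬ Reduced R) :
    ∃ N, Step R N ∧ meas N < meas R := by
  rw [Reduced] at h
  push_neg at h
  obtain ⟨i, j, j', h1, h2, hne⟩ := h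
  rcases lt_or_gt_of_ne hne with hlt | hlt
  · exact ⟨colAdd R j j', ⟨j, j', hlt, rfl⟩, step_meas_aux hlt h1 h2⟩
  · exact ⟨colAdd R j' j, ⟨j', j, hlt, rfl⟩, step_meas_aux hlt h2 h1⟩

lemma exists_reduced (M : Matrix (Fin n) (Fin n) (ZMod 2)) :
    ∃ R, Reduces M R ∧ Reduced R := by
  suffices H : ∀ k (M : Matrix (Fin n) (Fin n) (ZMod 2)), meas M ≤ k →
      ∃ R, Reduces M R ∧ Reduced R from H (meas M) M le_rfl
  intro k
  induction k with
  | zero =>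
    intro M hM
    by_cases h : Reduced M
    · exact ⟨M, Relation.ReflTransGen.refl, h⟩
    · obtain ⟨N, -, hlt⟩ := step_meas h
      omega
  | succ k ih =>
    intro M hM
    by_cases h : Reduced M
    · exact ⟨M, Relation.ReflTransGen.refl, h⟩
    · obtain ⟨N, hstep, hlt⟩ := step_meas h
      obtain ⟨R, hred, hRr⟩ := ih N (by omega)
      exact ⟨R, Relation.ReflTransGen.head hstep hred, hRr⟩

lemma rank_submatrix_equiv {l m o p : Type*} [Fintype l] [Fintype m] [Fintype o] [Fintype p]
    (A : Matrix l m (ZMod 2)) (e₁ : o ≃ l) (e₂ : p ≃ m) :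
    (A.submatrix e₁ e₂).rank = A.rank := by
  rw [Matrix.rank_eq_finrank_span_cols, Matrix.rank_eq_finrank_span_cols]
  have hrange : Set.range ((A.submatrix e₁ e₂)ᵀ)
      = ((LinearEquiv.funCongrLeft (ZMod 2) (ZMod 2) e₁ :
          (l → ZMod 2) →ₗ[ZMod 2] (o → ZMod 2)) : (l → ZMod 2) → (o → ZMod 2)) ''
        Set.range (Aᵀ) := by
    ext v
    constructor
    · rintro ⟨c, rfl⟩
      refine ⟨Aᵀ (e₂ c), ⟨e₂ c, rfl⟩, ?_⟩
      funext r
      simp [LinearEquiv.funCongrLeft_apply, LinearMap.funLeft_apply]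
    · rintro ⟨w, ⟨c, rfl⟩, rfl⟩
      refine ⟨e₂.symm c, ?_⟩
      funext r
      simp [LinearEquiv.funCongrLeft_apply, LinearMap.funLeft_apply]
  change finrank (ZMod 2) (span (ZMod 2) (Set.range ((A.submatrix e₁ e₂)ᵀ))) =
    finrank (ZMod 2) (span (ZMod 2) (Set.range (Aᵀ)))
  rw [hrange, Submodule.span_image, LinearEquiv.finrank_map_eq]

def revEquiv (S : Finset (Fin n)) : (S.image Fin.rev : Finset (Fin n)) ≃ S where
  toFun c := ⟨c.1.rev, by
    obtain ⟨a, ha, hae⟩ := mem_image.1 c.2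
    rw [← hae, Fin.rev_rev]; exact ha⟩
  invFun a := ⟨a.1.rev, mem_image_of_mem _ a.2⟩
  left_inv c := Subtype.ext (Fin.rev_rev _)
  right_inv a := Subtype.ext (Fin.rev_rev _)

lemma rk_antiTranspose (M : Matrix (Fin n) (Fin n) (ZMod 2)) (I J : Finset (Fin n)) :
    rk (antiTranspose M) (J.image Fin.rev) (I.image Fin.rev) = rk M I J := by
  have hmat : (antiTranspose M).submatrix
        (Subtype.val : { x // x ∈ J.image Fin.rev } → Fin n)
        (Subtype.val : { x // x ∈ I.image Fin.rev } → Fin n)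
      = ((M.submatrix (Subtype.val : I → Fin n) (Subtype.val : J → Fin n))ᵀ).submatrix
        (revEquiv J) (revEquiv I) := by
    ext r c
    simp [antiTranspose, revEquiv]
  rw [rk, hmat, rank_submatrix_equiv, Matrix.rank_transpose]
  rfl

lemma image_filter_le (a : Fin n) :
    (Finset.univ.filter (fun c => c ≤ a) : Finset (Fin n)).image Fin.rev
      = Finset.univ.filter (fun r => a.rev ≤ r) := by
  ext r
  simp only [mem_image, mem_filter, mem_univ, true_and]
  constructor
  · rintro ⟨b, hb, rfl⟩
    exact Fin.rev_le_rev.2 hb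
  · intro h
    exact ⟨r.rev, by simpa [Fin.rev_rev] using Fin.rev_le_rev.2 h, Fin.rev_rev r⟩

lemma image_filter_lt (a : Fin n) :
    (Finset.univ.filter (fun c => c < a) : Finset (Fin n)).image Fin.rev
      = Finset.univ.filter (fun r => a.rev < r) := by
  ext r
  simp only [mem_image, mem_filter, mem_univ, true_and]
  constructor
  · rintro ⟨b, hb, rfl⟩
    exact Fin.rev_lt_rev.2 hb
  · intro h
    exact ⟨r.rev, by simpa [Fin.rev_rev] using Fin.rev_lt_rev.2 h, Fin.rev_rev r⟩

lemma image_filter_ge (a : Fin n) :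
    (Finset.univ.filter (fun r => a ≤ r) : Finset (Fin n)).image Fin.rev
      = Finset.univ.filter (fun c => c ≤ a.rev) := by
  ext r
  simp only [mem_image, mem_filter, mem_univ, true_and]
  constructor
  · rintro ⟨b, hb, rfl⟩
    exact Fin.rev_le_rev.2 hb
  · intro h
    exact ⟨r.rev, by simpa [Fin.rev_rev] using Fin.rev_le_rev.2 h, Fin.rev_rev r⟩

lemma image_filter_gt (a : Fin n) :
    (Finset.univ.filter (fun r => a < r) : Finset (Fin n)).image Fin.rev
      = Finset.univ.filter (fun c => c < a.rev) := by
  ext r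
  simp only [mem_image, mem_filter, mem_univ, true_and]
  constructor
  · rintro ⟨b, hb, rfl⟩
    exact Fin.rev_lt_rev.2 hb
  · intro h
    exact ⟨r.rev, by simpa [Fin.rev_rev] using Fin.rev_lt_rev.2 h, Fin.rev_rev r⟩

lemma filter_le_card (j : Fin n) (P : Fin n → Prop) [DecidablePred P] :
    ((Finset.univ.filter (fun c => c ≤ j)).filter P).card
      = ((Finset.univ.filter (fun c => c < j)).filter P).card + (if P j then 1 else 0) := by
  have hins : (Finset.univ.filter (fun c => c ≤ j) : Finset (Fin n))
      = insert j (Finset.univ.filter (fun c => c < j)) := by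
    ext c
    simp only [mem_filter, mem_univ, true_and, mem_insert, Fin.le_def, Fin.lt_def, Fin.ext_iff]
    omega
  rw [hins, filter_insert]
  split_ifs with h
  · rw [card_insert_of_notMem (by simp)]
  · rfl

lemma cnt_split (R' : Matrix (Fin n) (Fin n) (ZMod 2)) (I : Finset (Fin n)) (a : Fin n) :
    ((Finset.univ.filter (fun c => c ≤ a)).filter (fun c => ∃ r ∈ I, R' r c ≠ 0)).card
      = ((Finset.univ.filter (fun c => c < a)).filter (fun c => ∃ r ∈ I, R' r c ≠ 0)).card
        + if (∃ r ∈ I, R' r a ≠ 0) then 1 else 0 := by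
  have hins : (Finset.univ.filter (fun c => c ≤ a) : Finset (Fin n))
      = insert a (Finset.univ.filter (fun c => c < a)) := by
    ext c
    simp only [mem_filter, mem_univ, true_and, mem_insert, Fin.le_def, Fin.lt_def, Fin.ext_iff]
    omega
  rw [hins, filter_insert]
  split_ifs with h
  · rw [card_insert_of_notMem (by simp)]
  · rfl

lemma persPair_anti_mp (M : Matrix (Fin n) (Fin n) (ZMod 2)) (i j : Fin n)
    (h : PersPair M i j) : PersPair (antiTranspose M) j.rev i.rev := by
  obtain ⟨R, hMR, hRred, hlow⟩ := h
  obtain ⟨R', hM'R', hR'red⟩ := exists_reduced (antiTranspose M)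
  refine ⟨R', hM'R', hR'red, ?_⟩
  have hupI : ∀ a : Fin n, ∀ x y : Fin n, x ≤ y → x ∈ Finset.univ.filter (fun r => a ≤ r) →
      y ∈ Finset.univ.filter (fun r => a ≤ r) := by
    intro a x y hxy hx
    simp only [mem_filter, mem_univ, true_and] at *
    exact le_trans hx hxy
  have hupI' : ∀ a : Fin n, ∀ x y : Fin n, x ≤ y → x ∈ Finset.univ.filter (fun r => a < r) →
      y ∈ Finset.univ.filter (fun r => a < r) := by
    intro a x y hxy hx
    simp only [mem_filter, mem_univ, true_and] at *
    exact lt_of_lt_of_le hx hxy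
  have hdnJ : ∀ a : Fin n, ∀ x y : Fin n, x ≤ y → y ∈ Finset.univ.filter (fun c => c ≤ a) →
      x ∈ Finset.univ.filter (fun c => c ≤ a) := by
    intro a x y hxy hy
    simp only [mem_filter, mem_univ, true_and] at *
    exact le_trans hxy hy
  have hdnJ' : ∀ a : Fin n, ∀ x y : Fin n, x ≤ y → y ∈ Finset.univ.filter (fun c => c < a) →
      x ∈ Finset.univ.filter (fun c => c < a) := by
    intro a x y hxy hy
    simp only [mem_filter, mem_univ, true_and] at *
    exact lt_of_le_of_lt hxy hy
  -- counts on R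
  have cA := rk_count hRred (Finset.univ.filter (fun r => i ≤ r))
      (Finset.univ.filter (fun c => c ≤ j)) (hupI i)
  have cB := rk_count hRred (Finset.univ.filter (fun r => i < r))
      (Finset.univ.filter (fun c => c ≤ j)) (hupI' i)
  have cC := rk_count hRred (Finset.univ.filter (fun r => i ≤ r))
      (Finset.univ.filter (fun c => c < j)) (hupI i)
  have cD := rk_count hRred (Finset.univ.filter (fun r => i < r))
      (Finset.univ.filter (fun c => c < j)) (hupI' i)
  -- the two endpoint facts at column j
  have hPge : ∃ r ∈ Finset.univ.filter (fun r => i ≤ r), R r j ≠ 0 :=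
    ⟨i, by simp, hlow.1⟩
  have hPgt : ¬ ∃ r ∈ Finset.univ.filter (fun r => i < r), R r j ≠ 0 := by
    rintro ⟨r, hr, hz⟩
    simp only [mem_filter, mem_univ, true_and] at hr
    exact absurd (hlow.2 r hz) (not_le.2 hr)
  -- A = C + 1 on R
  have hAC : rk R (Finset.univ.filter (fun r => i ≤ r)) (Finset.univ.filter (fun c => c ≤ j))
      = rk R (Finset.univ.filter (fun r => i ≤ r)) (Finset.univ.filter (fun c => c < j)) + 1 := by
    rw [cA, cC, filter_le_card j, if_pos hPge]
  -- B = D on R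
  have hBD : rk R (Finset.univ.filter (fun r => i < r)) (Finset.univ.filter (fun c => c ≤ j))
      = rk R (Finset.univ.filter (fun r => i < r)) (Finset.univ.filter (fun c => c < j)) := by
    rw [cB, cD, filter_le_card j, if_neg hPgt]
    exact Nat.add_zero _
  -- C = D on R (uses reducedness and IsLow R i j)
  have hCD : rk R (Finset.univ.filter (fun r => i ≤ r)) (Finset.univ.filter (fun c => c < j))
      = rk R (Finset.univ.filter (fun r => i < r)) (Finset.univ.filter (fun c => c < j)) := by
    rw [cC, cD]
    congr 1
    apply Finset.filter_congr
    intro c hc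
    simp only [mem_filter, mem_univ, true_and] at hc
    simp only [mem_filter, mem_univ, true_and]
    constructor
    · rintro ⟨r, hir, hz⟩
      by_contra hno
      push_neg at hno
      have hlc : IsLow R i c := by
        rw [isLow_iff]
        refine ⟨⟨r, hir, hz⟩, ?_⟩
        rintro ⟨r', hr', hz'⟩
        exact hz' (hno r' hr')
      exact absurd (hRred i c j hlc hlow) (ne_of_lt hc)
    · rintro ⟨r, hir, hz⟩
      exact ⟨r, hir.le, hz⟩
  -- transfer counts from R to M
  have tA := rk_reduces hMR (Finset.univ.filter (fun r => i ≤ r))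
      (Finset.univ.filter (fun c => c ≤ j)) (hdnJ j)
  have tB := rk_reduces hMR (Finset.univ.filter (fun r => i < r))
      (Finset.univ.filter (fun c => c ≤ j)) (hdnJ j)
  have tC := rk_reduces hMR (Finset.univ.filter (fun r => i ≤ r))
      (Finset.univ.filter (fun c => c < j)) (hdnJ' j)
  have tD := rk_reduces hMR (Finset.univ.filter (fun r => i < r))
      (Finset.univ.filter (fun c => c < j)) (hdnJ' j)
  -- duality of ranks
  have dA := rk_antiTranspose M (Finset.univ.filter (fun r => i ≤ r))
      (Finset.univ.filter (fun c => c ≤ j))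
  rw [image_filter_le j, image_filter_ge i] at dA
  have dB := rk_antiTranspose M (Finset.univ.filter (fun r => i < r))
      (Finset.univ.filter (fun c => c ≤ j))
  rw [image_filter_le j, image_filter_gt i] at dB
  have dC := rk_antiTranspose M (Finset.univ.filter (fun r => i ≤ r))
      (Finset.univ.filter (fun c => c < j))
  rw [image_filter_lt j, image_filter_ge i] at dC
  have dD := rk_antiTranspose M (Finset.univ.filter (fun r => i < r))
      (Finset.univ.filter (fun c => c < j))
  rw [image_filter_lt j, image_filter_gt i] at dD
  -- transfer from antiTranspose M to R'
  have uA := rk_reduces hM'R' (Finset.univ.filter (fun r => Fin.rev j ≤ r))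
      (Finset.univ.filter (fun c => c ≤ Fin.rev i)) (hdnJ (Fin.rev i))
  have uB := rk_reduces hM'R' (Finset.univ.filter (fun r => Fin.rev j < r))
      (Finset.univ.filter (fun c => c ≤ Fin.rev i)) (hdnJ (Fin.rev i))
  have uC := rk_reduces hM'R' (Finset.univ.filter (fun r => Fin.rev j ≤ r))
      (Finset.univ.filter (fun c => c < Fin.rev i)) (hdnJ' (Fin.rev i))
  have uD := rk_reduces hM'R' (Finset.univ.filter (fun r => Fin.rev j < r))
      (Finset.univ.filter (fun c => c < Fin.rev i)) (hdnJ' (Fin.rev i))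
  -- counts on R'
  have cA' := rk_count hR'red (Finset.univ.filter (fun r => Fin.rev j ≤ r))
      (Finset.univ.filter (fun c => c ≤ Fin.rev i)) (hupI (Fin.rev j))
  have cB' := rk_count hR'red (Finset.univ.filter (fun r => Fin.rev j < r))
      (Finset.univ.filter (fun c => c ≤ Fin.rev i)) (hupI' (Fin.rev j))
  have cC' := rk_count hR'red (Finset.univ.filter (fun r => Fin.rev j ≤ r))
      (Finset.univ.filter (fun c => c < Fin.rev i)) (hupI (Fin.rev j))
  have cD' := rk_count hR'red (Finset.univ.filter (fun r => Fin.rev j < r))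
      (Finset.univ.filter (fun c => c < Fin.rev i)) (hupI' (Fin.rev j))
  have eAC' := cnt_split R' (Finset.univ.filter (fun r => Fin.rev j ≤ r)) (Fin.rev i)
  have eBD' := cnt_split R' (Finset.univ.filter (fun r => Fin.rev j < r)) (Fin.rev i)
  -- key numeric identities on R'
  have key1 : rk R' (Finset.univ.filter (fun r => Fin.rev j ≤ r))
        (Finset.univ.filter (fun c => c ≤ Fin.rev i))
      = rk R' (Finset.univ.filter (fun r => Fin.rev j ≤ r))
        (Finset.univ.filter (fun c => c < Fin.rev i)) + 1 := by
    rw [← uA, ← uC, dA, dB, tA, tB, hAC, hBD, hCD]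
  have key2 : rk R' (Finset.univ.filter (fun r => Fin.rev j < r))
        (Finset.univ.filter (fun c => c ≤ Fin.rev i))
      = rk R' (Finset.univ.filter (fun r => Fin.rev j < r))
        (Finset.univ.filter (fun c => c < Fin.rev i)) := by
    rw [← uB, ← uD, dC, dD, tC, tD, hCD]
  -- derive the endpoint conditions for R'
  have hP1 : ∃ r ∈ Finset.univ.filter (fun r => Fin.rev j ≤ r), R' r (Fin.rev i) ≠ 0 := by
    by_contra hno
    rw [if_neg hno] at eAC'
    rw [cA', cC'] at key1
    rw [key1] at eAC'
    omega
  have hP2 : ¬ ∃ r ∈ Finset.univ.filter (fun r => Fin.rev j < r), R' r (Fin.rev i) ≠ 0 := by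
    intro hyes
    rw [if_pos hyes] at eBD'
    rw [cB', cD'] at key2
    rw [key2] at eBD'
    omega
  rw [isLow_iff]
  constructor
  · obtain ⟨r, hr, hz⟩ := hP1
    simp only [mem_filter, mem_univ, true_and] at hr
    exact ⟨r, hr, hz⟩
  · rintro ⟨r, hr, hz⟩
    exact hP2 ⟨r, by simp [hr], hz⟩


/-- anti-transpose duality. For a strictly upper triangular
matrix `M`, (i, j) is a persistence pair of `M` iff (n+1-j, n+1-i) is a
persistence pair of the anti-transpose of `M`. -/
theorem persPair_antiTranspose
    {n : ℕ} (M : Matrix (Fin n) (Fin n) (ZMod 2))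
    (hupper : ∀ i j : Fin n, j ≤ i → M i j = 0) (i j : Fin n) :
    PersPair M i j ↔ PersPair (antiTranspose M) j.rev i.rev := by
  constructor
  · exact persPair_anti_mp M i j
  · intro h
    have h2 := persPair_anti_mp (antiTranspose M) j.rev i.rev h
    have hAA : antiTranspose (antiTranspose M) = M := by
      funext r c
      simp [antiTranspose, Fin.rev_rev]
    rwa [hAA, Fin.rev_rev, Fin.rev_rev] at h2
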